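/- arXiv:1710.01651 — 10 statements merged into one kernel-verified Lean document; each statement's English description precedes it below -/
import Mathlib

section
/- For a topological space X and a family B of nonempty subsets of X, the selection principle S₁(O_B, O_B) holds in X if and only if S₁(O(B⁺), O(B⁺)) holds, where O_B denotes the collection of B-coverings of X, O(B⁺) denotes the collection of open coverings of the hyperspace B⁺, and B⁺ is B with the upper semi-finite topology. -/
/-- `𝒰` is a `𝓑`-covering of `X`: a family of open sets such that every member of `𝓑`
is contained in some member of `𝒰`. -/
def IsBCover {X : Type*} [TopologicalSpace X] (𝓑 𝒰 : Set (Set X)) : Prop :=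
  (∀ U ∈ 𝒰, IsOpen U) ∧ ∀ B ∈ 𝓑, ∃ U ∈ 𝒰, B ⊆ U

/-- The upper semi-finite topology on the family `𝓑`, generated by the sets
`⟨U⟩ = {B ∈ 𝓑 : B ⊆ U}` for `U` open in `X`. -/
def upperTop {X : Type*} [TopologicalSpace X] (𝓑 : Set (Set X)) : TopologicalSpace ↥𝓑 :=
  TopologicalSpace.generateFrom {S | ∃ U : Set X, IsOpen U ∧ S = {b : ↥𝓑 | ↑b ⊆ U}}

/-- The selection principle `S₁(𝒜, 𝒞)`. -/
def S1 {α : Type*} (𝒜 𝒞 : Set (Set α)) : Prop :=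
  ∀ A : ℕ → Set α, (∀ n, A n ∈ 𝒜) →
    ∃ c : ℕ → α, (∀ n, c n ∈ A n) ∧ Set.range c ∈ 𝒞

/-- The family of open coverings of `𝓑⁺`, the hyperspace `𝓑` with the upper
semi-finite topology. -/
def hyperOpenCovers {X : Type*} [TopologicalSpace X] (𝓑 : Set (Set X)) :
    Set (Set (Set ↥𝓑)) :=
  {𝒲 | (∀ W ∈ 𝒲, @IsOpen _ (upperTop 𝓑) W) ∧ ⋃₀ 𝒲 = Set.univ}

/-- Every open set in the upper semi-finite topology is a union of basic sets `⟨U⟩`. -/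
lemma exists_basic {X : Type*} [TopologicalSpace X] (𝓑 : Set (Set X)) {W : Set ↥𝓑}
    (hW : @IsOpen _ (upperTop 𝓑) W) :
    ∀ b ∈ W, ∃ U : Set X, IsOpen U ∧ (↑b : Set X) ⊆ U ∧ {c : ↥𝓑 | (↑c : Set X) ⊆ U} ⊆ W := by
  have hW' : TopologicalSpace.GenerateOpen
      {S | ∃ U : Set X, IsOpen U ∧ S = {b : ↥𝓑 | ↑b ⊆ U}} W := hW
  clear hW
  induction hW' with
  | basic S hS =>
      obtain ⟨U, hU, rfl⟩ := hS
      exact fun b hb => ⟨U, hU, hb, fun _ h => h⟩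
  | univ => exact fun b _ => ⟨Set.univ, isOpen_univ, Set.subset_univ _, fun _ _ => trivial⟩
  | inter S T hS hT ihS ihT =>
      intro b hb
      obtain ⟨U, hU, hbU, hUS⟩ := ihS b hb.1
      obtain ⟨V, hV, hbV, hVT⟩ := ihT b hb.2
      exact ⟨U ∩ V, hU.inter hV, Set.subset_inter hbU hbV,
        fun c hc => ⟨hUS (hc.trans Set.inter_subset_left),
          hVT (hc.trans Set.inter_subset_right)⟩⟩
  | sUnion S hS ih =>
      intro b hb
      obtain ⟨T, hT, hbT⟩ := hb
      obtain ⟨U, hU, hbU, hUT⟩ := ih T hT b hbT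
      exact ⟨U, hU, hbU, fun c hc => ⟨T, hT, hUT hc⟩⟩

/-- `S₁(O_𝓑, O_𝓑)` holds in `X` iff `S₁(O(𝓑⁺), O(𝓑⁺))` holds, where `𝓑` is a family
of nonempty subsets of `X`. -/
theorem statement2 {X : Type*} [TopologicalSpace X] (𝓑 : Set (Set X))
    (hne : ∀ B ∈ 𝓑, B.Nonempty) :
    S1 {𝒰 | IsBCover 𝓑 𝒰} {𝒰 | IsBCover 𝓑 𝒰} ↔
      S1 (hyperOpenCovers 𝓑) (hyperOpenCovers 𝓑) := by
  constructor
  · intro h 𝒲 h𝒲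
    -- build B-covers from hyper covers
    set 𝒰 : ℕ → Set (Set X) :=
      fun n => {U | IsOpen U ∧ ∃ W ∈ 𝒲 n, {c : ↥𝓑 | (↑c : Set X) ⊆ U} ⊆ W} with h𝒰
    have h𝒰cov : ∀ n, 𝒰 n ∈ {𝒰 | IsBCover 𝓑 𝒰} := by
      intro n
      refine ⟨fun U hU => hU.1, fun B hB => ?_⟩
      have hb : (⟨B, hB⟩ : ↥𝓑) ∈ ⋃₀ 𝒲 n := (h𝒲 n).2 ▸ Set.mem_univ _
      obtain ⟨W, hW, hbW⟩ := hb
      obtain ⟨U, hU, hbU, hUW⟩ := exists_basic 𝓑 ((h𝒲 n).1 W hW) _ hbW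
      exact ⟨U, ⟨hU, W, hW, hUW⟩, hbU⟩
    obtain ⟨c, hc, hcov⟩ := h 𝒰 h𝒰cov
    choose W hWmem hWsub using fun n => (hc n).2
    refine ⟨W, hWmem, ?_, ?_⟩
    · rintro _ ⟨n, rfl⟩
      exact (h𝒲 n).1 _ (hWmem n)
    · apply Set.eq_univ_of_forall
      intro b
      obtain ⟨_, ⟨n, rfl⟩, hbU⟩ := hcov.2 (↑b) b.2
      exact ⟨W n, ⟨n, rfl⟩, hWsub n hbU⟩
  · intro h 𝒰 h𝒰
    set 𝒲 : ℕ → Set (Set ↥𝓑) :=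
      fun n => {S | ∃ U ∈ 𝒰 n, S = {c : ↥𝓑 | (↑c : Set X) ⊆ U}} with h𝒲
    have h𝒲cov : ∀ n, 𝒲 n ∈ hyperOpenCovers 𝓑 := by
      intro n
      constructor
      · rintro _ ⟨U, hU, rfl⟩
        exact TopologicalSpace.GenerateOpen.basic _ ⟨U, (h𝒰 n).1 U hU, rfl⟩
      · apply Set.eq_univ_of_forall
        intro b
        obtain ⟨U, hU, hbU⟩ := (h𝒰 n).2 (↑b) b.2
        exact ⟨_, ⟨U, hU, rfl⟩, hbU⟩
    obtain ⟨c, hc, hcov⟩ := h 𝒲 h𝒲cov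
    choose U hUmem hUeq using hc
    refine ⟨U, hUmem, ?_, ?_⟩
    · rintro _ ⟨n, rfl⟩
      exact (h𝒰 n).1 _ (hUmem n)
    · intro B hB
      have hb : (⟨B, hB⟩ : ↥𝓑) ∈ ⋃₀ Set.range c := hcov.2 ▸ Set.mem_univ _
      obtain ⟨_, ⟨n, rfl⟩, hbW⟩ := hb
      rw [hUeq n] at hbW
      exact ⟨U n, ⟨n, rfl⟩, hbW⟩
end

section
/- For a topological space X and a family B of nonempty subsets of X, the selection principle S_fin(O_B, O_B) holds in X if and only if S_fin(O(B⁺), O(B⁺)) holds, where B⁺ is B with the upper semi-finite topology. -/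
/-- The selection principle `S_fin(𝒜, 𝒞)`. -/
def Sfin {α : Type*} (𝒜 𝒞 : Set (Set α)) : Prop :=
  ∀ A : ℕ → Set α, (∀ n, A n ∈ 𝒜) →
    ∃ C : ℕ → Set α, (∀ n, C n ⊆ A n ∧ (C n).Finite) ∧ (⋃ n, C n) ∈ 𝒞

/-- Basic sets form a basis: every open set of the upper topology containing `b`
contains a basic set `⟨U⟩` around `b`. -/
lemma upperTop_basic {X : Type*} [TopologicalSpace X] (𝓑 : Set (Set X)) {W : Set ↥𝓑}
    (hW : @IsOpen _ (upperTop 𝓑) W) :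
    ∀ b ∈ W, ∃ U : Set X, IsOpen U ∧ (b : Set X) ⊆ U ∧ {c : ↥𝓑 | ↑c ⊆ U} ⊆ W := by
  have hW' : TopologicalSpace.GenerateOpen
      {S | ∃ U : Set X, IsOpen U ∧ S = {b : ↥𝓑 | ↑b ⊆ U}} W := hW
  induction hW' with
  | basic S hS =>
      obtain ⟨U, hU, rfl⟩ := hS
      exact fun b hb => ⟨U, hU, hb, fun c hc => hc⟩
  | univ => exact fun b _ => ⟨Set.univ, isOpen_univ, Set.subset_univ _, fun c _ => trivial⟩
  | inter W₁ W₂ h₁ h₂ ih₁ ih₂ =>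
      intro b hb
      obtain ⟨U₁, hU₁, hb₁, hs₁⟩ := ih₁ h₁ b hb.1
      obtain ⟨U₂, hU₂, hb₂, hs₂⟩ := ih₂ h₂ b hb.2
      exact ⟨U₁ ∩ U₂, hU₁.inter hU₂, Set.subset_inter hb₁ hb₂,
        fun c hc => ⟨hs₁ (fun x hx => (hc hx).1), hs₂ (fun x hx => (hc hx).2)⟩⟩
  | sUnion S hS ih =>
      intro b hb
      obtain ⟨t, htS, hbt⟩ := hb
      obtain ⟨U, hU, hbU, hsub⟩ := ih t htS (hS t htS) b hbt
      exact ⟨U, hU, hbU, fun c hc => ⟨t, htS, hsub hc⟩⟩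

lemma upperTop_basic_open {X : Type*} [TopologicalSpace X] (𝓑 : Set (Set X)) {U : Set X}
    (hU : IsOpen U) : @IsOpen _ (upperTop 𝓑) {c : ↥𝓑 | ↑c ⊆ U} :=
  TopologicalSpace.GenerateOpen.basic _ ⟨U, hU, rfl⟩

/-- `S_fin(O_𝓑, O_𝓑)` holds in `X` iff `S_fin(O(𝓑⁺), O(𝓑⁺))` holds, where `𝓑` is a
family of nonempty subsets of `X`. -/
theorem statement3 {X : Type*} [TopologicalSpace X] (𝓑 : Set (Set X))
    (hne : ∀ B ∈ 𝓑, B.Nonempty) :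
    Sfin {𝒰 | IsBCover 𝓑 𝒰} {𝒰 | IsBCover 𝓑 𝒰} ↔
      Sfin (hyperOpenCovers 𝓑) (hyperOpenCovers 𝓑) := by
  constructor
  · intro h 𝒲 h𝒲
    set A : ℕ → Set (Set X) :=
      fun n => {U | IsOpen U ∧ ∃ W ∈ 𝒲 n, {c : ↥𝓑 | ↑c ⊆ U} ⊆ W} with hAdef
    have hA : ∀ n, A n ∈ {𝒰 | IsBCover 𝓑 𝒰} := by
      intro n
      refine ⟨fun U hU => hU.1, ?_⟩
      intro B hB
      have hmem : (⟨B, hB⟩ : ↥𝓑) ∈ ⋃₀ 𝒲 n := by rw [(h𝒲 n).2]; trivial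
      obtain ⟨W, hWn, hbW⟩ := hmem
      obtain ⟨U, hU, hBU, hsub⟩ := upperTop_basic 𝓑 ((h𝒲 n).1 W hWn) _ hbW
      exact ⟨U, ⟨hU, W, hWn, hsub⟩, hBU⟩
    obtain ⟨C, hC, hCcov⟩ := h A hA
    have hsel : ∀ n (U : Set X), ∃ W : Set ↥𝓑,
        U ∈ A n → W ∈ 𝒲 n ∧ {c : ↥𝓑 | ↑c ⊆ U} ⊆ W := by
      intro n U
      by_cases hU : U ∈ A n
      · obtain ⟨W, hW, hs⟩ := hU.2
        exact ⟨W, fun _ => ⟨hW, hs⟩⟩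
      · exact ⟨∅, fun hc => absurd hc hU⟩
    choose g hg using hsel
    refine ⟨fun n => g n '' C n, fun n => ⟨?_, (hC n).2.image _⟩, ?_, ?_⟩
    · rintro W ⟨U, hU, rfl⟩
      exact (hg n U ((hC n).1 hU)).1
    · rintro W ⟨S, ⟨n, rfl⟩, U, hU, rfl⟩
      exact (h𝒲 n).1 _ (hg n U ((hC n).1 hU)).1
    · apply Set.eq_univ_iff_forall.mpr
      intro b
      obtain ⟨U, hUmem, hbU⟩ := hCcov.2 b.1 b.2
      obtain ⟨S, ⟨n, rfl⟩, hUn⟩ := hUmem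
      exact ⟨g n U, ⟨g n '' C n, ⟨n, rfl⟩, ⟨U, hUn, rfl⟩⟩,
        (hg n U ((hC n).1 hUn)).2 hbU⟩
  · intro h 𝒰 h𝒰
    set A : ℕ → Set (Set ↥𝓑) :=
      fun n => (fun U => {c : ↥𝓑 | ↑c ⊆ U}) '' (𝒰 n) with hAdef
    have hA : ∀ n, A n ∈ hyperOpenCovers 𝓑 := by
      intro n
      constructor
      · rintro W ⟨U, hU, rfl⟩
        exact upperTop_basic_open 𝓑 ((h𝒰 n).1 U hU)
      · apply Set.eq_univ_iff_forall.mpr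
        intro b
        obtain ⟨U, hU, hbU⟩ := (h𝒰 n).2 b.1 b.2
        exact ⟨_, ⟨U, hU, rfl⟩, hbU⟩
    obtain ⟨D, hD, hDcov⟩ := h A hA
    have hsel : ∀ n (W : Set ↥𝓑), ∃ U : Set X,
        W ∈ A n → U ∈ 𝒰 n ∧ W = {c : ↥𝓑 | ↑c ⊆ U} := by
      intro n W
      by_cases hW : W ∈ A n
      · obtain ⟨U, hU, rfl⟩ := hW
        exact ⟨U, fun _ => ⟨hU, rfl⟩⟩
      · exact ⟨∅, fun hc => absurd hc hW⟩
    choose g hg using hsel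
    refine ⟨fun n => g n '' D n, fun n => ⟨?_, (hD n).2.image _⟩, ?_, ?_⟩
    · rintro U ⟨W, hW, rfl⟩
      exact (hg n W ((hD n).1 hW)).1
    · rintro U ⟨S, ⟨n, rfl⟩, W, hW, rfl⟩
      exact (h𝒰 n).1 _ (hg n W ((hD n).1 hW)).1
    · intro B hB
      have hmem : (⟨B, hB⟩ : ↥𝓑) ∈ ⋃₀ ⋃ n, D n := by rw [hDcov.2]; trivial
      obtain ⟨W, hWmem, hbW⟩ := hmem
      obtain ⟨S, ⟨n, rfl⟩, hWn⟩ := hWmem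
      refine ⟨g n W, ⟨g n '' D n, ⟨n, rfl⟩, ⟨W, hWn, rfl⟩⟩, ?_⟩
      have := (hg n W ((hD n).1 hWn)).2
      rw [this] at hbW
      exact hbW
end

section
/- Let X be a topological space and B a family of subsets of X. If U is a nontrivial B-covering of X (i.e., X ∉ U) and F is a finite subset of U, then U \ F is still a B-covering of X. -/
/-- `𝓑` is a bornology on `X`: an ideal of subsets of `X` covering `X`. -/
structure IsBornology {X : Type*} (𝓑 : Set (Set X)) : Prop where
  covers : ∀ x : X, ∃ B ∈ 𝓑, x ∈ B
  subset_mem : ∀ ⦃A B : Set X⦄, A ⊆ B → B ∈ 𝓑 → A ∈ 𝓑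
  union_mem : ∀ ⦃A B : Set X⦄, A ∈ 𝓑 → B ∈ 𝓑 → A ∪ B ∈ 𝓑

/-- `𝓑₀` is a compact base for the bornology `𝓑`: a cofinal subfamily consisting of
compact sets. -/
def IsCompactBase {X : Type*} [TopologicalSpace X] (𝓑 𝓑₀ : Set (Set X)) : Prop :=
  𝓑₀ ⊆ 𝓑 ∧ (∀ B ∈ 𝓑₀, IsCompact B) ∧ ∀ B ∈ 𝓑, ∃ B₀ ∈ 𝓑₀, B ⊆ B₀

/-- Removing finitely many members from a nontrivial `𝓑`-covering (one with `X ∉ 𝒰`)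
leaves a `𝓑`-covering, when `𝓑` is a bornology. -/
theorem statement4 {X : Type*} [TopologicalSpace X] (𝓑 : Set (Set X))
    (hB : IsBornology 𝓑) (𝒰 : Set (Set X)) (h𝒰 : IsBCover 𝓑 𝒰)
    (hnt : Set.univ ∉ 𝒰) (F : Set (Set X)) (hF : F.Finite) (hF𝒰 : F ⊆ 𝒰) :
    IsBCover 𝓑 (𝒰 \ F) := by

  constructor
  · exact fun U hU => h𝒰.1 U hU.1
  · intro B hBmem
    -- for each V ∈ F pick a point outside V
    have hne : ∀ V ∈ F, ∃ x : X, x ∉ V := by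
      intro V hV
      by_contra h
      push_neg at h
      have : V = Set.univ := Set.eq_univ_of_forall h
      exact hnt (this ▸ hF𝒰 hV)
    rcases F.eq_empty_or_nonempty with rfl | ⟨V₀, hV₀⟩
    · simpa using h𝒰.2 B hBmem
    have : Nonempty X := by
      obtain ⟨x, -⟩ := hne V₀ hV₀
      exact ⟨x⟩
    choose! p hp using hne
    set s : Set X := p '' F with hs
    have hsfin : s.Finite := hF.image p
    -- s is contained in some member of 𝓑
    clear hs
    have key : ∀ w : Set X, w.Finite → ∃ C ∈ 𝓑, w ⊆ C := by
      intro w hwf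
      refine Set.Finite.induction_on w hwf ⟨B, hBmem, by simp⟩ ?_
      rintro x t - - ⟨C, hC, htC⟩
      obtain ⟨D, hD, hxD⟩ := hB.covers x
      exact ⟨D ∪ C, hB.union_mem hD hC,
        Set.insert_subset (Set.mem_union_left _ hxD) (htC.trans Set.subset_union_right)⟩
    obtain ⟨C, hC, hsC⟩ := key s hsfin
    obtain ⟨U, hU, hBU⟩ := h𝒰.2 (B ∪ C) (hB.union_mem hBmem hC)
    refine ⟨U, ⟨hU, ?_⟩, (Set.subset_union_left).trans hBU⟩
    intro hUF
    exact hp U hUF (hBU (Set.mem_union_right _ (hsC ⟨U, hUF, rfl⟩)))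
end

section
/- Let X be a topological space, B a bornology on X, A ⊆ C_B(X), and n ∈ ω. If the zero function 0 lies in the closure of A in C_B(X), then the family U_n(A) = { f⁻¹((−1/(n+1), 1/(n+1))) : f ∈ A } is a B-covering of X. -/
/-- The topology of uniform convergence on members of `𝓑` on the space `C(X, ℝ)` of
continuous real-valued functions: basic neighborhoods of `f` are the sets
`⟨B, ε⟩[f] = {g : ∀ x ∈ B, |f x - g x| < ε}` for `B ∈ 𝓑`, `ε > 0`. -/
def CBtop (X : Type*) [TopologicalSpace X] (𝓑 : Set (Set X)) : TopologicalSpace C(X, ℝ) :=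
  TopologicalSpace.induced (fun f => UniformOnFun.ofFun 𝓑 ⇑f)
    (UniformOnFun.topologicalSpace X ℝ 𝓑)

open UniformConvergence

/-- If the zero function lies in the closure of `A ⊆ C_𝓑(X)`, then the family
`𝒰ₙ(A) = { f⁻¹((-1/(n+1), 1/(n+1))) : f ∈ A }` is a `𝓑`-covering of `X`. -/
theorem statement6 {X : Type*} [TopologicalSpace X] (𝓑 : Set (Set X))
    (hB : IsBornology 𝓑) (A : Set C(X, ℝ)) (n : ℕ)
    (h0 : (0 : C(X, ℝ)) ∈ @closure _ (CBtop X 𝓑) A) :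
    IsBCover 𝓑 {V | ∃ f ∈ A, V = ⇑f ⁻¹' Set.Ioo (-(1 / (n + 1) : ℝ)) (1 / (n + 1))} := by
  have hε : (0 : ℝ) < 1 / (n + 1) := by positivity
  constructor
  · rintro U ⟨f, hf, rfl⟩
    exact isOpen_Ioo.preimage f.continuous
  · intro B hBmem
    letI := CBtop X 𝓑
    -- the set of g with |g x| < ε on B is a neighborhood of 0
    have hV : {p : ℝ × ℝ | dist p.1 p.2 < 1 / (n + 1)} ∈ uniformity ℝ :=
      Metric.dist_mem_uniformity hε
    have hN : {g : X →ᵤ[𝓑] ℝ | ∀ x ∈ B,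
        (UniformOnFun.toFun 𝓑 (UniformOnFun.ofFun 𝓑 ⇑(0 : C(X, ℝ))) x,
          UniformOnFun.toFun 𝓑 g x) ∈ {p : ℝ × ℝ | dist p.1 p.2 < 1 / (n + 1)}} ∈
        nhds (UniformOnFun.ofFun 𝓑 ⇑(0 : C(X, ℝ))) :=
      UniformOnFun.gen_mem_nhds _ _ _ hBmem hV
    have hN' : (fun f : C(X, ℝ) => UniformOnFun.ofFun 𝓑 ⇑f) ⁻¹'
        {g : X →ᵤ[𝓑] ℝ | ∀ x ∈ B,
          (UniformOnFun.toFun 𝓑 (UniformOnFun.ofFun 𝓑 ⇑(0 : C(X, ℝ))) x,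
            UniformOnFun.toFun 𝓑 g x) ∈ {p : ℝ × ℝ | dist p.1 p.2 < 1 / (n + 1)}} ∈
        @nhds _ (CBtop X 𝓑) (0 : C(X, ℝ)) := by
      rw [CBtop, nhds_induced]
      exact Filter.preimage_mem_comap hN
    rw [mem_closure_iff_nhds] at h0
    obtain ⟨f, hf1, hf2⟩ := h0 _ hN'
    refine ⟨⇑f ⁻¹' Set.Ioo (-(1 / (n + 1) : ℝ)) (1 / (n + 1)), ⟨f, hf2, rfl⟩, ?_⟩
    intro x hx
    have := hf1 x hx
    simp only [UniformOnFun.toFun_ofFun, ContinuousMap.coe_zero, Pi.zero_apply,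
      Set.mem_setOf_eq, Real.dist_eq, zero_sub, abs_neg] at this
    rw [Set.mem_preimage, Set.mem_Ioo]
    constructor <;> [exact neg_lt_of_abs_lt this; exact lt_of_abs_lt this]
end

section
/- Let X be a topological space with a bornology B, and let (Aₙ) be a sequence of finite subsets of C_B(X). If ⋃ₙ Aₙ has 0 in its closure and for each n and each g ∈ Aₙ there is a proper open set U_g ⊊ X with g ≡ 1 on X \ U_g, then the family ⋃ₙ {U_g : g ∈ Aₙ} is a B-covering of X. -/
/-- If `(Aₙ)` is a sequence of finite subsets of `C_𝓑(X)` with `0` in the closure of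
`⋃ₙ Aₙ`, and for each `n` and `g ∈ Aₙ` there is a proper open set `U g ⊊ X` with
`g ≡ 1` on `X \ U g`, then `⋃ₙ {U g : g ∈ Aₙ}` is a `𝓑`-covering of `X`. -/
theorem statement7 {X : Type*} [TopologicalSpace X] (𝓑 : Set (Set X))
    (hB : IsBornology 𝓑) (A : ℕ → Set C(X, ℝ)) (hfin : ∀ n, (A n).Finite)
    (h0 : (0 : C(X, ℝ)) ∈ @closure _ (CBtop X 𝓑) (⋃ n, A n))
    (U : C(X, ℝ) → Set X)
    (hU : ∀ n, ∀ g ∈ A n, IsOpen (U g) ∧ U g ≠ Set.univ ∧ ∀ x ∉ U g, g x = 1) :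
    IsBCover 𝓑 (⋃ n, U '' A n) := by
  constructor
  · rintro V hV
    simp only [Set.mem_iUnion, Set.mem_image] at hV
    obtain ⟨n, g, hg, rfl⟩ := hV
    exact (hU n g hg).1
  · intro B hBmem
    letI t := CBtop X 𝓑
    have hV : {p : ℝ × ℝ | |p.1 - p.2| < 1/2} ∈ uniformity ℝ := by
      have := Metric.dist_mem_uniformity (α := ℝ) (by norm_num : (0:ℝ) < 1/2)
      simpa [Real.dist_eq] using this
    have hnhds : {g : C(X,ℝ) | ∀ x ∈ B, |(0:C(X,ℝ)) x - g x| < 1/2} ∈ @nhds _ t 0 := by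
      have heq : @nhds _ t (0 : C(X,ℝ)) =
          Filter.comap (fun f : C(X,ℝ) => UniformOnFun.ofFun 𝓑 ⇑f)
            (nhds (UniformOnFun.ofFun 𝓑 ⇑(0:C(X,ℝ)))) := nhds_induced _ _
      rw [heq]
      exact Filter.preimage_mem_comap
        (UniformOnFun.gen_mem_nhds ℝ 𝓑 (UniformOnFun.ofFun 𝓑 ⇑(0:C(X,ℝ))) hBmem hV)
    rcases (@mem_closure_iff_nhds C(X,ℝ) t (x := (0:C(X,ℝ))) (s := ⋃ n, A n)).mp h0 _ hnhds with ⟨g, hg1, hg2⟩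
    rcases Set.mem_iUnion.mp hg2 with ⟨n, hgA⟩
    refine ⟨U g, Set.mem_iUnion.mpr ⟨n, Set.mem_image_of_mem _ hgA⟩, fun x hx => ?_⟩
    by_contra hxU
    have := hg1 x hx
    rw [(hU n g hgA).2.2 x hxU] at this
    simp at this
    norm_num at this
end

section
/- Let X be a Tychonoff space, B a bornology on X with a compact base B₀, and τ the collection of open sets of X. Let Γ_B(X) be the filter on τ generated by the sets V(B) = {U ∈ τ : B ⊆ U} for B ∈ B. If K is an F₁-composable class of filters and the neighborhood filter of every point of C_B(X) belongs to K, then Γ_B(X) ∈ K. -/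
universe u

/-- The image filter `R(F) = {R[F₀] : F₀ ∈ F}↑` of a filter `F` under a relation `R`. -/
def relMap {C D : Type*} (R : C → D → Prop) (F : Filter C) : Filter D :=
  F.lift' fun s => {d | ∃ c ∈ s, R c d}

/-- A class of filters `K` is `F₁`-composable if for every relation `R ⊆ C × D` and
every proper filter `F ∈ K` on `C`, if `R(F)` is a proper filter on `D` then
`R(F) ∈ K`. -/
def F1Composable (K : (C : Type u) → Filter C → Prop) : Prop :=
  ∀ (C D : Type u) (R : C → D → Prop) (F : Filter C), F.NeBot → K C F →
    (relMap R F).NeBot → K D (relMap R F)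

/-- A class of filters `K` is `F_ω`-steady if for every proper filter `F ∈ K` and
every countably based proper filter `G` meshing with `F`, the supremum
`F ∨ G = {F₀ ∩ G₀}↑` (which is `F ⊓ G` in Mathlib's order on filters) belongs to `K`. -/
def FOmegaSteady (K : (C : Type u) → Filter C → Prop) : Prop :=
  ∀ (C : Type u) (F G : Filter C), F.NeBot → K C F → G.NeBot →
    G.IsCountablyGenerated → (∀ s ∈ F, ∀ t ∈ G, (s ∩ t).Nonempty) → K C (F ⊓ G)

/-- The filter `Γ_𝓑(X)` on the set `τ` of open sets of `X`, generated by the sets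
`V(B) = {U ∈ τ : B ⊆ U}` for `B ∈ 𝓑`. -/
def GammaB {X : Type u} [TopologicalSpace X] (𝓑 : Set (Set X)) :
    Filter {U : Set X // IsOpen U} :=
  Filter.generate {S | ∃ B ∈ 𝓑, S = {U : {U : Set X // IsOpen U} | B ⊆ ↑U}}


open Filter Set Topology in
private theorem sep_lemma_13 {X : Type*} [TopologicalSpace X] [T35Space X] {B U : Set X}
    (hB : IsCompact B) (hU : IsOpen U) (hBU : B ⊆ U) :
    ∃ h : C(X, ℝ), (∀ x ∈ B, h x = 0) ∧ ∀ x ∉ U, 1 ≤ h x := by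
  classical
  have key : ∀ x ∈ B, ∃ f : X → unitInterval, Continuous f ∧ f x = 0 ∧ Set.EqOn f 1 Uᶜ :=
    fun x hx => CompletelyRegularSpace.completely_regular x Uᶜ hU.isClosed_compl
      (fun h => h (hBU hx))
  choose! f hfc hf0 hf1 using key
  have hcov : B ⊆ ⋃ x ∈ B, {y | (f x y : ℝ) < 1/2} := by
    intro x hx
    refine mem_biUnion hx ?_
    simp [hf0 x hx]
  obtain ⟨t, htB, htfin, htcov⟩ := hB.elim_finite_subcover_image
    (fun x hx => (isOpen_Iio.preimage (continuous_subtype_val.comp (hfc x hx))))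
    hcov
  set s : Finset X := htfin.toFinset with hs
  have hsB : ∀ x ∈ s, x ∈ B := fun x hx => htB (htfin.mem_toFinset.mp hx)
  have gcont : Continuous fun y => ∏ x ∈ s, (f x y : ℝ) :=
    continuous_finset_prod _ fun x hx => continuous_subtype_val.comp (hfc x (hsB x hx))
  refine ⟨⟨fun y => max 0 (2 * (∏ x ∈ s, (f x y : ℝ)) - 1),
    continuous_const.max (by continuity)⟩, ?_, ?_⟩
  · intro y hy
    have := htcov hy
    simp only [mem_iUnion] at this
    obtain ⟨x, hxt, hxy⟩ := this
    have hxs : x ∈ s := htfin.mem_toFinset.mpr hxt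
    have hprod : (∏ x ∈ s, (f x y : ℝ)) ≤ (f x y : ℝ) := by
      rw [← Finset.mul_prod_erase s _ hxs]
      have h1 : (∏ z ∈ s.erase x, (f z y : ℝ)) ≤ 1 :=
        Finset.prod_le_one (fun z _ => (f z y).2.1) (fun z _ => (f z y).2.2)
      calc (f x y : ℝ) * ∏ z ∈ s.erase x, (f z y : ℝ)
          ≤ (f x y : ℝ) * 1 := mul_le_mul_of_nonneg_left h1 (f x y).2.1
        _ = (f x y : ℝ) := mul_one _
    have hlt : (∏ x ∈ s, (f x y : ℝ)) < 1/2 := lt_of_le_of_lt hprod hxy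
    simp only [ContinuousMap.coe_mk]
    rw [max_eq_left]
    linarith
  · intro y hy
    have hall : ∀ x ∈ s, (f x y : ℝ) = 1 := by
      intro x hx
      have := hf1 x (hsB x hx) (show y ∈ Uᶜ from hy)
      simp [this]
    simp only [ContinuousMap.coe_mk, Finset.prod_congr rfl hall, Finset.prod_const_one]
    norm_num

open Filter Set Topology in
private theorem mem_nhds_zero_iff_13 {X : Type*} [TopologicalSpace X] {𝓑 : Set (Set X)}
    (h1 : 𝓑.Nonempty) (h2 : DirectedOn (· ⊆ ·) 𝓑) {t : Set C(X, ℝ)} :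
    t ∈ @nhds _ (CBtop X 𝓑) 0 ↔
      ∃ B ∈ 𝓑, ∃ ε > 0, {g : C(X, ℝ) | ∀ x ∈ B, |g x| < ε} ⊆ t := by
  have hb := UniformOnFun.hasBasis_nhds_of_basis X ℝ 𝓑
    (UniformOnFun.ofFun 𝓑 ⇑(0 : C(X, ℝ))) h1 h2 Metric.uniformity_basis_dist
  rw [show CBtop X 𝓑 = TopologicalSpace.induced (fun f : C(X,ℝ) => UniformOnFun.ofFun 𝓑 ⇑f)
      (UniformOnFun.topologicalSpace X ℝ 𝓑) from rfl, nhds_induced,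
    (hb.comap _).mem_iff]
  constructor
  · rintro ⟨⟨B, ε⟩, ⟨hB, hε⟩, hsub⟩
    refine ⟨B, hB, ε, hε, fun g hg => hsub ?_⟩
    simp only [mem_preimage, UniformOnFun.gen, mem_setOf_eq]
    intro x hx
    simpa [Real.dist_eq] using hg x hx
  · rintro ⟨B, hB, ε, hε, hsub⟩
    refine ⟨⟨B, ε⟩, ⟨hB, hε⟩, fun g hg => hsub ?_⟩
    simp only [mem_preimage, UniformOnFun.gen, mem_setOf_eq] at hg
    intro x hx
    simpa [Real.dist_eq] using hg x hx

/-- If `X` is Tychonoff, `𝓑` is a bornology with a compact base, `K` is an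
`F₁`-composable class of filters, and every neighborhood filter of `C_𝓑(X)` belongs
to `K`, then `Γ_𝓑(X) ∈ K`. -/
theorem statement13 {X : Type u} [TopologicalSpace X] [T35Space X]
    (𝓑 : Set (Set X)) (hB : IsBornology 𝓑) (hcb : ∃ 𝓑₀, IsCompactBase 𝓑 𝓑₀)
    (K : (C : Type u) → Filter C → Prop) (hK : F1Composable K)
    (hnhds : ∀ f : C(X, ℝ), K _ (@nhds _ (CBtop X 𝓑) f)) :
    K _ (GammaB 𝓑) := by
  classical
  open Filter Set in
  obtain ⟨𝓑₀, h𝓑₀sub, h𝓑₀cpt, h𝓑₀cof⟩ := hcb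
  set R : C(X, ℝ) → {U : Set X // IsOpen U} → Prop :=
    fun g U => ∀ x, |g x| < 1 → x ∈ (U : Set X) with hR
  have hdir : DirectedOn (· ⊆ ·) 𝓑 := fun A hA B hB' =>
    ⟨A ∪ B, hB.union_mem hA hB', Set.subset_union_left, Set.subset_union_right⟩
  have hGnb : (GammaB 𝓑).NeBot := by
    refine Filter.neBot_of_le (f := pure ⟨Set.univ, isOpen_univ⟩) ?_
    rw [GammaB, Filter.le_generate_iff]
    rintro S ⟨B, hBm, rfl⟩
    exact Set.subset_univ B
  have hmono : Monotone fun (s : Set C(X, ℝ)) =>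
      {d : {U : Set X // IsOpen U} | ∃ c ∈ s, R c d} := by
    rintro s₁ s₂ hsub d ⟨c, hc, hRc⟩
    exact ⟨c, hsub hc, hRc⟩
  have heq : relMap R (@nhds _ (CBtop X 𝓑) 0) = GammaB 𝓑 := by
    apply le_antisymm
    · rw [GammaB, Filter.le_generate_iff]
      rintro S ⟨B, hBmem, rfl⟩
      have hW : {g : C(X, ℝ) | ∀ x ∈ B, |g x| < (1 : ℝ)/2} ∈ @nhds _ (CBtop X 𝓑) 0 := by
        rw [mem_nhds_zero_iff_13 ⟨B, hBmem⟩ hdir]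
        exact ⟨B, hBmem, 1/2, by norm_num, subset_rfl⟩
      refine Filter.mem_of_superset (Filter.mem_lift' hW) ?_
      rintro U ⟨g, hg, hgR⟩ x hx
      exact hgR x (by have := hg x hx; linarith)
    · intro s hs
      rw [relMap, Filter.mem_lift'_sets hmono] at hs
      obtain ⟨t, ht, hts⟩ := hs
      rcases Set.eq_empty_or_nonempty 𝓑 with hBe | hBne
      · have hXe : IsEmpty X := ⟨fun x => by
          obtain ⟨B, hBm, _⟩ := hB.covers x
          rw [hBe] at hBm
          exact hBm⟩
        have h0 : (0 : C(X, ℝ)) ∈ t := by letI := CBtop X 𝓑; exact mem_of_mem_nhds ht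
        exact Filter.mem_of_superset Filter.univ_mem
          (fun d _ => hts ⟨0, h0, fun x _ => hXe.elim x⟩)
      · obtain ⟨B, hBmem, ε, hε, hsub⟩ := (mem_nhds_zero_iff_13 hBne hdir).mp ht
        obtain ⟨B₀, hB₀mem, hBB₀⟩ := h𝓑₀cof B hBmem
        have hVmem : {U : {U : Set X // IsOpen U} | B₀ ⊆ ↑U} ∈ GammaB 𝓑 :=
          Filter.mem_generate_of_mem ⟨B₀, h𝓑₀sub hB₀mem, rfl⟩
        refine Filter.mem_of_superset hVmem ?_
        intro U hU
        obtain ⟨h, hh0, hh1⟩ := sep_lemma_13 (h𝓑₀cpt B₀ hB₀mem) U.2 hU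
        refine hts ⟨h, hsub fun x hx => ?_, fun x hxlt => ?_⟩
        · rw [hh0 x (hBB₀ hx)]
          simpa using hε
        · by_contra hxU
          have := hh1 x hxU
          rw [abs_lt] at hxlt
          linarith
  have hrnb : (relMap R (@nhds _ (CBtop X 𝓑) 0)).NeBot := heq ▸ hGnb
  have := hK C(X, ℝ) {U : Set X // IsOpen U} R (@nhds _ (CBtop X 𝓑) 0)
    (by letI := CBtop X 𝓑; exact nhds_neBot) (hnhds 0) hrnb
  rwa [heq] at this
end

section
/- Let K be a class of filters that is F₁-composable and F_ω-steady, X a topological space with topology τ, and B a bornology on X. If the filter Γ_B(X) on τ generated by the sets V(B) = {U ∈ τ : B ⊆ U} (B ∈ B) belongs to K, then C_B(X) is a K-space, i.e., the neighborhood filter of every point of C_B(X) belongs to K. -/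
universe u

-- AUX

theorem topNeBot {α : Type*} [Nonempty α] : (⊤ : Filter α).NeBot :=
  Filter.neBot_of_le (f := pure (Classical.arbitrary α)) le_top

theorem relMap_mono {C D : Type*} (R : C → D → Prop) :
    Monotone fun s : Set C => {d | ∃ c ∈ s, R c d} := by
  intro s t hst d hd
  obtain ⟨c, hc, hR⟩ := hd
  exact ⟨c, hst hc, hR⟩

theorem relMap_hasBasis {C D : Type*} {ι : Type*} {p : ι → Prop} {s : ι → Set C}
    {F : Filter C} (R : C → D → Prop) (h : F.HasBasis p s) :
    (relMap R F).HasBasis p fun i => {d | ∃ c ∈ s i, R c d} :=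
  h.lift' (relMap_mono R)

theorem gammaB_basis {X : Type u} [TopologicalSpace X] {𝓑 : Set (Set X)} (hB : IsBornology 𝓑)
    (hne : 𝓑.Nonempty) :
    (GammaB 𝓑).HasBasis (· ∈ 𝓑) (fun B => {U : {U : Set X // IsOpen U} | B ⊆ ↑U}) := by
  have h1 : GammaB 𝓑 = ⨅ B ∈ 𝓑, Filter.principal {U : {U : Set X // IsOpen U} | B ⊆ ↑U} := by
    rw [GammaB, Filter.generate_eq_biInf]
    rw [show {S | ∃ B ∈ 𝓑, S = {U : {U : Set X // IsOpen U} | B ⊆ ↑U}}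
        = (fun B => {U : {U : Set X // IsOpen U} | B ⊆ ↑U}) '' 𝓑 from by
      ext S; simp [Set.mem_image, eq_comm]]
    rw [iInf_image]
  rw [h1]
  exact Filter.hasBasis_biInf_principal
    (fun B₁ h₁ B₂ h₂ => ⟨B₁ ∪ B₂, hB.union_mem h₁ h₂,
      fun U hU => Set.subset_union_left.trans hU, fun U hU => Set.subset_union_right.trans hU⟩)
    hne

theorem gammaB_neBot {X : Type u} [TopologicalSpace X] (𝓑 : Set (Set X)) :
    (GammaB 𝓑).NeBot := by
  have h : pure (⟨Set.univ, isOpen_univ⟩ : {U : Set X // IsOpen U}) ≤ GammaB 𝓑 := by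
    rw [GammaB, Filter.le_generate_iff]
    rintro S ⟨B, _, rfl⟩
    exact Set.subset_univ B
  exact Filter.neBot_of_le h

theorem keySet {X : Type u} [TopologicalSpace X] (f : C(X, ℝ)) (B : Set X) (n : ℕ) :
    {g : C(X, ℝ) | ∃ p ∈ ({U : {U : Set X // IsOpen U} | B ⊆ ↑U} ×ˢ Set.Ici n),
        ∀ x ∈ (p.1 : Set X), dist (g x) (f x) < 1 / (p.2 + 1)}
      = {g : C(X, ℝ) | ∀ x ∈ B, dist (g x) (f x) < 1 / (n + 1)} := by
  ext g
  constructor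
  · rintro ⟨⟨U, m⟩, ⟨hBU, hm⟩, hg⟩ x hx
    refine lt_of_lt_of_le (hg x (hBU hx)) ?_
    apply one_div_le_one_div_of_le
    · positivity
    · exact_mod_cast Nat.succ_le_succ hm
  · intro hg
    refine ⟨(⟨{x | dist (g x) (f x) < 1 / (n + 1)},
        isOpen_lt (Continuous.dist (map_continuous g) (map_continuous f)) continuous_const⟩, n),
      ⟨fun x hx => hg x hx, le_refl n⟩, fun x hx => hx⟩

theorem nhds_CBtop_basis {X : Type u} [TopologicalSpace X] {𝓑 : Set (Set X)}
    (hB : IsBornology 𝓑) (hne : 𝓑.Nonempty) (f : C(X, ℝ)) :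
    (@nhds _ (CBtop X 𝓑) f).HasBasis (fun Bn : Set X × ℕ => Bn.1 ∈ 𝓑 ∧ True)
      (fun Bn => {g : C(X, ℝ) | ∀ x ∈ Bn.1, dist (g x) (f x) < 1 / (Bn.2 + 1)}) := by
  have hdir : DirectedOn (· ⊆ ·) 𝓑 := fun B₁ h₁ B₂ h₂ =>
    ⟨B₁ ∪ B₂, hB.union_mem h₁ h₂, Set.subset_union_left, Set.subset_union_right⟩
  have hb := (UniformOnFun.hasBasis_nhds_of_basis X ℝ 𝓑 (UniformOnFun.ofFun 𝓑 ⇑f) hne hdir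
      Metric.uniformity_basis_dist_inv_nat_succ).comap
      (fun g : C(X, ℝ) => UniformOnFun.ofFun 𝓑 ⇑g)
  have hind : @nhds _ (CBtop X 𝓑) f
      = Filter.comap (fun g : C(X, ℝ) => UniformOnFun.ofFun 𝓑 ⇑g)
        (nhds (UniformOnFun.ofFun 𝓑 ⇑f)) := nhds_induced _ f
  rw [hind]
  exact hb

/-- If `K` is an `F₁`-composable and `F_ω`-steady class of filters and
`Γ_𝓑(X) ∈ K`, then `C_𝓑(X)` is a `K`-space: every neighborhood filter of a point of
`C_𝓑(X)` belongs to `K`. -/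
theorem statement14 {X : Type u} [TopologicalSpace X]
    (𝓑 : Set (Set X)) (hB : IsBornology 𝓑)
    (K : (C : Type u) → Filter C → Prop)
    (hK1 : F1Composable K) (hK2 : FOmegaSteady K)
    (hG : K _ (GammaB 𝓑)) :
    ∀ f : C(X, ℝ), K _ (@nhds _ (CBtop X 𝓑) f) := by
  intro f
  have hΓne : (GammaB 𝓑).NeBot := gammaB_neBot 𝓑
  by_cases hX : Nonempty X
  · -- main case
    obtain ⟨x⟩ := hX
    obtain ⟨B₀, hB₀, _⟩ := hB.covers x
    have hne : 𝓑.Nonempty := ⟨B₀, hB₀⟩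
    set τt := {U : Set X // IsOpen U} with hτt
    haveI : Nonempty τt := ⟨⟨Set.univ, isOpen_univ⟩⟩
    have hΓb : (GammaB 𝓑).HasBasis (· ∈ 𝓑) (fun B => {U : τt | B ⊆ ↑U}) := gammaB_basis hB hne
    -- Step 1: transport Γ to τt × ℕ
    have h2 : relMap (fun (U : τt) (p : τt × ℕ) => p.1 = U) (GammaB 𝓑)
        = Filter.comap Prod.fst (GammaB 𝓑) := by
      rw [Filter.comap_eq_lift']
      unfold relMap
      congr 1
      funext s
      ext p
      constructor
      · rintro ⟨c, hc, rfl⟩; exact hc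
      · intro h; exact ⟨p.1, h, rfl⟩
    have hF₂eq : Filter.comap Prod.fst (GammaB 𝓑) = (GammaB 𝓑) ×ˢ (⊤ : Filter ℕ) :=
      (Filter.prod_top).symm
    have hF₂ne : (Filter.comap Prod.fst (GammaB 𝓑) : Filter (τt × ℕ)).NeBot := by
      rw [hF₂eq]; exact Filter.prod_neBot.mpr ⟨hΓne, topNeBot⟩
    have hKF₂ : K (τt × ℕ) (Filter.comap Prod.fst (GammaB 𝓑)) := by
      rw [← h2]
      exact hK1 _ _ _ _ hΓne hG (h2 ▸ hF₂ne)
    -- Step 2: meet with countably generated filter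
    have hGeq : (Filter.comap Prod.snd Filter.atTop : Filter (τt × ℕ))
        = (⊤ : Filter τt) ×ˢ (Filter.atTop : Filter ℕ) := (Filter.top_prod).symm
    have hGne : (Filter.comap Prod.snd Filter.atTop : Filter (τt × ℕ)).NeBot := by
      rw [hGeq]; exact Filter.prod_neBot.mpr ⟨topNeBot, Filter.atTop_neBot⟩
    have hinf : Filter.comap Prod.fst (GammaB 𝓑) ⊓ Filter.comap Prod.snd Filter.atTop
        = (GammaB 𝓑) ×ˢ (Filter.atTop : Filter ℕ) := (Filter.prod_eq_inf _ _).symm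
    have hPne : ((GammaB 𝓑) ×ˢ (Filter.atTop : Filter ℕ)).NeBot :=
      Filter.prod_neBot.mpr ⟨hΓne, Filter.atTop_neBot⟩
    have hmesh : ∀ s ∈ Filter.comap Prod.fst (GammaB 𝓑),
        ∀ t ∈ (Filter.comap Prod.snd Filter.atTop : Filter (τt × ℕ)), (s ∩ t).Nonempty := by
      intro s hs t ht
      have hst : s ∩ t ∈ (GammaB 𝓑) ×ˢ (Filter.atTop : Filter ℕ) := by
        rw [← hinf]
        exact Filter.inter_mem (Filter.le_def.mp inf_le_left s hs)
          (Filter.le_def.mp inf_le_right t ht)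
      exact Filter.nonempty_of_mem hst
    have hKP : K (τt × ℕ) ((GammaB 𝓑) ×ˢ (Filter.atTop : Filter ℕ)) := by
      rw [← hinf]
      exact hK2 _ _ _ hF₂ne hKF₂ hGne (Filter.comap.isCountablyGenerated _ _) hmesh
    -- Step 3: map to C(X, ℝ)
    set Sx : τt × ℕ → C(X, ℝ) → Prop :=
      fun p g => ∀ x ∈ (p.1 : Set X), dist (g x) (f x) < 1 / (p.2 + 1) with hSx
    have hbasisP : ((GammaB 𝓑) ×ˢ (Filter.atTop : Filter ℕ)).HasBasis
        (fun Bn : Set X × ℕ => Bn.1 ∈ 𝓑 ∧ True)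
        (fun Bn => {U : τt | Bn.1 ⊆ ↑U} ×ˢ Set.Ici Bn.2) := hΓb.prod Filter.atTop_basis
    have hLb := relMap_hasBasis Sx hbasisP
    have hRb := nhds_CBtop_basis hB hne f
    have heq : relMap Sx ((GammaB 𝓑) ×ˢ (Filter.atTop : Filter ℕ))
        = @nhds _ (CBtop X 𝓑) f := by
      apply Filter.ext
      intro t
      rw [hLb.mem_iff, hRb.mem_iff]
      refine exists_congr fun i => and_congr_right fun _ => ?_
      rw [show {d | ∃ c ∈ {U : τt | i.1 ⊆ ↑U} ×ˢ Set.Ici i.2, Sx c d}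
          = {g : C(X, ℝ) | ∀ x ∈ i.1, dist (g x) (f x) < 1 / (i.2 + 1)} from keySet f i.1 i.2]
    have hfinalne : (relMap Sx ((GammaB 𝓑) ×ˢ (Filter.atTop : Filter ℕ))).NeBot := by
      rw [heq]
      letI := CBtop X 𝓑
      exact nhds_neBot
    rw [← heq]
    exact hK1 _ _ _ _ hPne hKP hfinalne
  · -- X empty
    have hE : IsEmpty X := not_nonempty_iff.mp hX
    have hsub : Subsingleton C(X, ℝ) := ⟨fun g h => by ext x; exact hE.elim x⟩
    have h1 : (@nhds _ (CBtop X 𝓑) f) = ⊤ := by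
      apply top_unique
      refine le_trans ?_ (@pure_le_nhds _ (CBtop X 𝓑) f)
      intro s hs
      rw [Filter.mem_top]
      exact Set.eq_univ_of_forall fun g => hsub.elim g f ▸ hs
    have h2 : relMap (fun (_ : {U : Set X // IsOpen U}) (_ : C(X, ℝ)) => True) (GammaB 𝓑)
        = ⊤ := by
      apply top_unique
      intro s hs
      rw [Filter.mem_top]
      obtain ⟨u, hu, hsub'⟩ := (Filter.mem_lift'_sets (relMap_mono _)).mp hs
      obtain ⟨c, hc⟩ := Filter.nonempty_of_mem hu
      exact Set.eq_univ_of_forall fun g => hsub' ⟨c, hc, trivial⟩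
    have hne2 : (relMap (fun (_ : {U : Set X // IsOpen U}) (_ : C(X, ℝ)) => True)
        (GammaB 𝓑)).NeBot := by
      rw [h2]; exact topNeBot
    rw [h1, ← h2]
    exact hK1 _ _ _ _ hΓne hG hne2
end

section
/- Let X be a topological space, B a bornology on X with a compact base, and suppose X is a γ_B-space (every nontrivial B-covering of X has a countable B-cofinite subcovering). Then every closed subspace Y of X is a γ_{B_Y}-space, where B_Y = {B ∩ Y : B ∈ B}. -/
/-- `𝒰` is a `𝓑`-cofinite covering: an infinite family of proper open sets such that
for every `B ∈ 𝓑` all but finitely many members of `𝒰` contain `B`. -/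
def IsBCofinite {X : Type*} [TopologicalSpace X] (𝓑 𝒰 : Set (Set X)) : Prop :=
  𝒰.Infinite ∧ (∀ U ∈ 𝒰, IsOpen U ∧ U ≠ Set.univ) ∧
    ∀ B ∈ 𝓑, {U ∈ 𝒰 | ¬ B ⊆ U}.Finite

/-- `X` is a `γ_𝓑`-space: every nontrivial `𝓑`-covering of `X` has a countable
`𝓑`-cofinite subcovering. -/
def GammaBSpace {X : Type*} [TopologicalSpace X] (𝓑 : Set (Set X)) : Prop :=
  ∀ 𝒰 : Set (Set X), IsBCover 𝓑 𝒰 → Set.univ ∉ 𝒰 →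
    ∃ 𝒱 ⊆ 𝒰, 𝒱.Countable ∧ IsBCofinite 𝓑 𝒱 ∧ IsBCover 𝓑 𝒱

/-- The trace bornology `𝓑_Y = {B ∩ Y : B ∈ 𝓑}` on the subspace `Y`. -/
def traceBorn {X : Type*} (𝓑 : Set (Set X)) (Y : Set X) : Set (Set ↥Y) :=
  {S | ∃ B ∈ 𝓑, S = Subtype.val ⁻¹' B}

/-- If `𝓑` is a bornology with a compact base on `X` and `X` is a `γ_𝓑`-space, then
every closed subspace `Y` is a `γ_{𝓑_Y}`-space. -/
theorem statement16 {X : Type*} [TopologicalSpace X] (𝓑 : Set (Set X))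
    (hB : IsBornology 𝓑) (hcb : ∃ 𝓑₀, IsCompactBase 𝓑 𝓑₀)
    (hX : GammaBSpace 𝓑) (Y : Set X) (hY : IsClosed Y) :
    GammaBSpace (traceBorn 𝓑 Y) := by
  classical
  intro 𝒰 h𝒰 huniv
  -- extend each member of 𝒰 to an open set of X
  have hext : ∀ U : Set Y, ∃ V : Set X, U ∈ 𝒰 → (IsOpen V ∧ U = Subtype.val ⁻¹' V) := by
    intro U
    by_cases hU : U ∈ 𝒰
    · obtain ⟨V, hV, hVU⟩ := isOpen_induced_iff.mp (h𝒰.1 U hU)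
      exact ⟨V, fun _ => ⟨hV, hVU.symm⟩⟩
    · exact ⟨∅, fun h => absurd h hU⟩
  choose V hV using hext
  set e : Set Y → Set X := fun U => V U ∪ Yᶜ with he
  have hpre : ∀ U ∈ 𝒰, (Subtype.val ⁻¹' (e U) : Set Y) = U := by
    intro U hU
    have h1 : (Subtype.val ⁻¹' Yᶜ : Set Y) = ∅ := by
      ext x; simp [x.2]
    simp only [he, Set.preimage_union, h1, Set.union_empty]
    exact ((hV U hU).2).symm
  have heopen : ∀ U ∈ 𝒰, IsOpen (e U) := fun U hU =>
    ((hV U hU).1).union hY.isOpen_compl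
  have hene : ∀ U ∈ 𝒰, e U ≠ Set.univ := by
    intro U hU h
    apply huniv
    have : (Subtype.val ⁻¹' (e U) : Set Y) = Set.univ := by rw [h]; rfl
    rw [hpre U hU] at this
    rwa [this] at hU
  -- key equivalence
  have hkey : ∀ U ∈ 𝒰, ∀ B : Set X, (B ⊆ e U ↔ (Subtype.val ⁻¹' B : Set Y) ⊆ U) := by
    intro U hU B
    constructor
    · intro h
      rw [← hpre U hU]
      exact fun x hx => h hx
    · intro h x hx
      by_cases hxY : x ∈ Y
      · have : (⟨x, hxY⟩ : Y) ∈ U := h hx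
        rw [(hV U hU).2] at this
        exact Or.inl this
      · exact Or.inr hxY
  -- the extended family is a 𝓑-cover of X
  have hWcover : IsBCover 𝓑 (e '' 𝒰) := by
    constructor
    · rintro W ⟨U, hU, rfl⟩; exact heopen U hU
    · intro B hBmem
      obtain ⟨U, hU, hBU⟩ := h𝒰.2 (Subtype.val ⁻¹' B) ⟨B, hBmem, rfl⟩
      exact ⟨e U, ⟨U, hU, rfl⟩, (hkey U hU B).mpr hBU⟩
  have hWuniv : Set.univ ∉ e '' 𝒰 := by
    rintro ⟨U, hU, h⟩; exact hene U hU h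
  obtain ⟨𝒱', h𝒱'sub, h𝒱'cnt, h𝒱'cof, h𝒱'cov⟩ := hX (e '' 𝒰) hWcover hWuniv
  -- choose preimages
  have hsec : ∀ W : Set X, ∃ U : Set Y, W ∈ 𝒱' → (U ∈ 𝒰 ∧ e U = W) := by
    intro W
    by_cases hW : W ∈ 𝒱'
    · obtain ⟨U, hU, hUe⟩ := h𝒱'sub hW
      exact ⟨U, fun _ => ⟨hU, hUe⟩⟩
    · exact ⟨∅, fun h => absurd h hW⟩
  choose c hc using hsec
  refine ⟨c '' 𝒱', ?_, h𝒱'cnt.image c, ⟨?_, ?_, ?_⟩, ?_, ?_⟩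
  · rintro U ⟨W, hW, rfl⟩; exact (hc W hW).1
  · -- infinite
    apply h𝒱'cof.1.image
    intro W₁ h₁ W₂ h₂ hcc
    rw [← (hc W₁ h₁).2, ← (hc W₂ h₂).2, hcc]
  · rintro U ⟨W, hW, rfl⟩
    refine ⟨(h𝒰.1 _ (hc W hW).1), ?_⟩
    intro h
    exact huniv (h ▸ (hc W hW).1)
  · -- cofinite
    rintro S ⟨B, hB, rfl⟩
    have hfin := (h𝒱'cof.2.2 B hB).image c
    apply hfin.subset
    rintro U ⟨⟨W, hW, rfl⟩, hnsub⟩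
    refine ⟨W, ⟨hW, ?_⟩, rfl⟩
    intro hBW
    apply hnsub
    exact (hkey (c W) (hc W hW).1 B).mp ((hc W hW).2.symm ▸ hBW)
  · rintro U ⟨W, hW, rfl⟩; exact h𝒰.1 _ (hc W hW).1
  · rintro S ⟨B, hB, rfl⟩
    obtain ⟨W, hW, hBW⟩ := h𝒱'cov.2 B hB
    refine ⟨c W, ⟨W, hW, rfl⟩, ?_⟩
    exact (hkey (c W) (hc W hW).1 B).mp ((hc W hW).2.symm ▸ hBW)
end

section
/- Let X and Y be disjoint topological spaces with bornologies B and L respectively. If X is a γ_B-space, Y is a γ_L-space, and the product X × Y is a γ_{B⊗L}-space, then the topological sum X + Y is a γ_{B⊕L}-space. -/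
/-- The product bornology `𝓑 ⊗ 𝓛` on `X × Y`, generated by products `B ×ˢ L`. -/
def prodBorn {X Y : Type*} (𝓑 : Set (Set X)) (𝓛 : Set (Set Y)) : Set (Set (X × Y)) :=
  {S | ∃ B ∈ 𝓑, ∃ L ∈ 𝓛, S ⊆ B ×ˢ L}

/-- The sum bornology `𝓑 ⊕ 𝓛` on the topological sum `X ⊕ Y`, generated by the sets
`B ⊔ L` with `B ∈ 𝓑`, `L ∈ 𝓛`. -/
def sumBorn2 {X Y : Type*} (𝓑 : Set (Set X)) (𝓛 : Set (Set Y)) : Set (Set (X ⊕ Y)) :=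
  {S | ∃ B ∈ 𝓑, ∃ L ∈ 𝓛, S ⊆ Sum.inl '' B ∪ Sum.inr '' L}

lemma gamma_nonempty {Z : Type*} [TopologicalSpace Z] {𝓜 : Set (Set Z)}
    (h : GammaBSpace 𝓜) : 𝓜.Nonempty := by
  by_contra hne
  have hM : 𝓜 = ∅ := Set.not_nonempty_iff_eq_empty.mp hne
  have hcov : IsBCover 𝓜 ∅ := ⟨fun U hU => hU.elim, fun B hBm => by simp [hM] at hBm⟩
  obtain ⟨𝒱, h𝒱sub, -, hcof, -⟩ := h ∅ hcov (by simp)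
  have hve : 𝒱 = ∅ := Set.subset_empty_iff.mp h𝒱sub
  exact hcof.1 (hve ▸ Set.finite_empty)

lemma gamma_sum_left {X Y : Type*} [TopologicalSpace X] [TopologicalSpace Y]
    [IsEmpty X] {𝓑 : Set (Set X)} {𝓛 : Set (Set Y)}
    (hB0 : ∅ ∈ 𝓑) (h2 : GammaBSpace 𝓛) : GammaBSpace (sumBorn2 𝓑 𝓛) := by
  intro 𝒰 h𝒰 hnt
  set r : Set (X ⊕ Y) → Set Y := fun U => Sum.inr ⁻¹' U with hr
  have hinj : Function.Injective r := by
    intro U V h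
    ext z
    rcases z with a | b
    · exact isEmptyElim a
    · exact ⟨fun hz => (Set.ext_iff.mp h b).mp hz, fun hz => (Set.ext_iff.mp h b).mpr hz⟩
  have himg : ∀ {L : Set Y} {U : Set (X ⊕ Y)}, L ⊆ r U → Sum.inr '' L ⊆ U :=
    fun h => Set.image_subset_iff.mpr h
  have h𝒰Y : IsBCover 𝓛 (r '' 𝒰) := by
    constructor
    · rintro V ⟨U, hU, rfl⟩
      exact (h𝒰.1 U hU).preimage continuous_inr
    · intro L hLm
      obtain ⟨U, hU, hsub⟩ := h𝒰.2 (Sum.inl '' (∅ : Set X) ∪ Sum.inr '' L)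
        ⟨∅, hB0, L, hLm, subset_rfl⟩
      exact ⟨r U, ⟨U, hU, rfl⟩, fun y hy => hsub (Or.inr ⟨y, hy, rfl⟩)⟩
  have hntY : Set.univ ∉ r '' 𝒰 := by
    rintro ⟨U, hU, hUuniv⟩
    have hUu : U = Set.univ := by
      ext z
      simp only [Set.mem_univ, iff_true]
      rcases z with a | b
      · exact isEmptyElim a
      · exact Set.eq_univ_iff_forall.mp hUuniv b
    exact hnt (hUu ▸ hU)
  obtain ⟨𝒱Y, h𝒱Ysub, h𝒱Ycnt, h𝒱Ycof, h𝒱Ycov⟩ := h2 (r '' 𝒰) h𝒰Y hntY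
  have himgV : r '' {U ∈ 𝒰 | r U ∈ 𝒱Y} = 𝒱Y := by
    apply Set.Subset.antisymm
    · rintro _ ⟨U, hU, rfl⟩; exact hU.2
    · intro V hV
      obtain ⟨U, hU, rfl⟩ := h𝒱Ysub hV
      exact ⟨U, ⟨hU, hV⟩, rfl⟩
  have hSempty : ∀ {S : Set (X ⊕ Y)} {B : Set X} {L : Set Y},
      S ⊆ Sum.inl '' B ∪ Sum.inr '' L → S ⊆ Sum.inr '' L := by
    intro S B L h z hz
    rcases h hz with ⟨a, -, -⟩ | hb
    · exact isEmptyElim a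
    · exact hb
  refine ⟨{U ∈ 𝒰 | r U ∈ 𝒱Y}, fun U hU => hU.1,
    Set.Countable.mono (fun U hU => hU.2) (h𝒱Ycnt.preimage hinj), ⟨?_, ?_, ?_⟩, ?_, ?_⟩
  · exact Set.Infinite.of_image r (himgV.symm ▸ h𝒱Ycof.1)
  · intro U hU
    exact ⟨h𝒰.1 U hU.1, fun h => hnt (h ▸ hU.1)⟩
  · rintro S ⟨B, hBm, L, hLm, hsub⟩
    refine (((h𝒱Ycof.2.2 L hLm).preimage (fun a _ b _ h => hinj h)).subset ?_)
    rintro U ⟨⟨hU𝒰, hUY⟩, hns⟩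
    exact ⟨hUY, fun h => hns ((hSempty hsub).trans (himg h))⟩
  · intro U hU; exact h𝒰.1 U hU.1
  · rintro S ⟨B, hBm, L, hLm, hsub⟩
    obtain ⟨V, hV, hLV⟩ := h𝒱Ycov.2 L hLm
    obtain ⟨U, hU, rfl⟩ := h𝒱Ysub hV
    exact ⟨U, ⟨hU, hV⟩, (hSempty hsub).trans (himg hLV)⟩

lemma gamma_sum_right {X Y : Type*} [TopologicalSpace X] [TopologicalSpace Y]
    [IsEmpty Y] {𝓑 : Set (Set X)} {𝓛 : Set (Set Y)}
    (hL0 : ∅ ∈ 𝓛) (h1 : GammaBSpace 𝓑) : GammaBSpace (sumBorn2 𝓑 𝓛) := by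
  intro 𝒰 h𝒰 hnt
  set r : Set (X ⊕ Y) → Set X := fun U => Sum.inl ⁻¹' U with hr
  have hinj : Function.Injective r := by
    intro U V h
    ext z
    rcases z with a | b
    · exact ⟨fun hz => (Set.ext_iff.mp h a).mp hz, fun hz => (Set.ext_iff.mp h a).mpr hz⟩
    · exact isEmptyElim b
  have himg : ∀ {B : Set X} {U : Set (X ⊕ Y)}, B ⊆ r U → Sum.inl '' B ⊆ U :=
    fun h => Set.image_subset_iff.mpr h
  have h𝒰X : IsBCover 𝓑 (r '' 𝒰) := by
    constructor
    · rintro V ⟨U, hU, rfl⟩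
      exact (h𝒰.1 U hU).preimage continuous_inl
    · intro B hBm
      obtain ⟨U, hU, hsub⟩ := h𝒰.2 (Sum.inl '' B ∪ Sum.inr '' (∅ : Set Y))
        ⟨B, hBm, ∅, hL0, subset_rfl⟩
      exact ⟨r U, ⟨U, hU, rfl⟩, fun x hx => hsub (Or.inl ⟨x, hx, rfl⟩)⟩
  have hntX : Set.univ ∉ r '' 𝒰 := by
    rintro ⟨U, hU, hUuniv⟩
    have hUu : U = Set.univ := by
      ext z
      simp only [Set.mem_univ, iff_true]
      rcases z with a | b
      · exact Set.eq_univ_iff_forall.mp hUuniv a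
      · exact isEmptyElim b
    exact hnt (hUu ▸ hU)
  obtain ⟨𝒱X, h𝒱Xsub, h𝒱Xcnt, h𝒱Xcof, h𝒱Xcov⟩ := h1 (r '' 𝒰) h𝒰X hntX
  have himgV : r '' {U ∈ 𝒰 | r U ∈ 𝒱X} = 𝒱X := by
    apply Set.Subset.antisymm
    · rintro _ ⟨U, hU, rfl⟩; exact hU.2
    · intro V hV
      obtain ⟨U, hU, rfl⟩ := h𝒱Xsub hV
      exact ⟨U, ⟨hU, hV⟩, rfl⟩
  have hSempty : ∀ {S : Set (X ⊕ Y)} {B : Set X} {L : Set Y},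
      S ⊆ Sum.inl '' B ∪ Sum.inr '' L → S ⊆ Sum.inl '' B := by
    intro S B L h z hz
    rcases h hz with ha | ⟨b, -, -⟩
    · exact ha
    · exact isEmptyElim b
  refine ⟨{U ∈ 𝒰 | r U ∈ 𝒱X}, fun U hU => hU.1,
    Set.Countable.mono (fun U hU => hU.2) (h𝒱Xcnt.preimage hinj), ⟨?_, ?_, ?_⟩, ?_, ?_⟩
  · exact Set.Infinite.of_image r (himgV.symm ▸ h𝒱Xcof.1)
  · intro U hU
    exact ⟨h𝒰.1 U hU.1, fun h => hnt (h ▸ hU.1)⟩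
  · rintro S ⟨B, hBm, L, hLm, hsub⟩
    refine (((h𝒱Xcof.2.2 B hBm).preimage (fun a _ b _ h => hinj h)).subset ?_)
    rintro U ⟨⟨hU𝒰, hUX⟩, hns⟩
    exact ⟨hUX, fun h => hns ((hSempty hsub).trans (himg h))⟩
  · intro U hU; exact h𝒰.1 U hU.1
  · rintro S ⟨B, hBm, L, hLm, hsub⟩
    obtain ⟨V, hV, hBV⟩ := h𝒱Xcov.2 B hBm
    obtain ⟨U, hU, rfl⟩ := h𝒱Xsub hV
    exact ⟨U, ⟨hU, hV⟩, (hSempty hsub).trans (himg hBV)⟩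

lemma gamma_sum_main {X Y : Type*} [TopologicalSpace X] [TopologicalSpace Y]
    {𝓑 : Set (Set X)} {𝓛 : Set (Set Y)}
    (hB : IsBornology 𝓑) (hL : IsBornology 𝓛)
    (hX : Nonempty X) (hY : Nonempty Y)
    (h3 : GammaBSpace (prodBorn 𝓑 𝓛)) :
    GammaBSpace (sumBorn2 𝓑 𝓛) := by
  classical
  obtain ⟨x₀⟩ := hX
  obtain ⟨y₀⟩ := hY
  obtain ⟨B₁, hB₁, hx₀⟩ := hB.covers x₀
  obtain ⟨L₁, hL₁, hy₀⟩ := hL.covers y₀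
  intro 𝒰 h𝒰 hnt
  set f : Set (X ⊕ Y) → Set (X × Y) := fun U => (Sum.inl ⁻¹' U) ×ˢ (Sum.inr ⁻¹' U) with hf
  have key : ∀ (B : Set X) (L : Set Y) (U : Set (X ⊕ Y)),
      (B ∪ B₁) ×ˢ (L ∪ L₁) ⊆ f U →
      ∀ S : Set (X ⊕ Y), S ⊆ Sum.inl '' B ∪ Sum.inr '' L → S ⊆ U := by
    intro B L U hsub S hS z hz
    rcases hS hz with ⟨a, ha, rfl⟩ | ⟨b, hb, rfl⟩
    · exact (hsub (Set.mk_mem_prod (Or.inl ha) (Or.inr hy₀))).1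
    · exact (hsub (Set.mk_mem_prod (Or.inr hx₀) (Or.inl hb))).2
  have h𝒲 : IsBCover (prodBorn 𝓑 𝓛) (f '' 𝒰) := by
    constructor
    · rintro W ⟨U, hU, rfl⟩
      exact ((h𝒰.1 U hU).preimage continuous_inl).prod ((h𝒰.1 U hU).preimage continuous_inr)
    · rintro S ⟨B, hBm, L, hLm, hS⟩
      obtain ⟨U, hU, hsub⟩ := h𝒰.2 (Sum.inl '' (B ∪ B₁) ∪ Sum.inr '' (L ∪ L₁))
        ⟨B ∪ B₁, hB.union_mem hBm hB₁, L ∪ L₁, hL.union_mem hLm hL₁, subset_rfl⟩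
      refine ⟨f U, ⟨U, hU, rfl⟩, hS.trans (Set.prod_mono ?_ ?_)⟩
      · intro a ha; exact hsub (Or.inl ⟨a, Or.inl ha, rfl⟩)
      · intro b hb; exact hsub (Or.inr ⟨b, Or.inl hb, rfl⟩)
  have hnt𝒲 : Set.univ ∉ f '' 𝒰 := by
    rintro ⟨U, hU, hUuniv⟩
    have hUu : U = Set.univ := by
      ext z
      simp only [Set.mem_univ, iff_true]
      rcases z with a | b
      · exact (Set.eq_univ_iff_forall.mp hUuniv (a, y₀)).1
      · exact (Set.eq_univ_iff_forall.mp hUuniv (x₀, b)).2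
    exact hnt (hUu ▸ hU)
  obtain ⟨𝒲, h𝒲sub, h𝒲cnt, h𝒲cof, h𝒲cov⟩ := h3 (f '' 𝒰) h𝒲 hnt𝒲
  set g : Set (X × Y) → Set (X ⊕ Y) := fun W =>
    if h : ∃ U ∈ 𝒰, f U = W then h.choose else ∅ with hg
  have hg𝒰 : ∀ W ∈ 𝒲, g W ∈ 𝒰 ∧ f (g W) = W := by
    intro W hW
    obtain ⟨U, hU, hfU⟩ := h𝒲sub hW
    have hex : ∃ U ∈ 𝒰, f U = W := ⟨U, hU, hfU⟩
    simp only [hg, dif_pos hex]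
    exact ⟨hex.choose_spec.1, hex.choose_spec.2⟩
  have hginj : Set.InjOn g 𝒲 := by
    intro W hW W' hW' h
    rw [← (hg𝒰 W hW).2, ← (hg𝒰 W' hW').2, h]
  refine ⟨g '' 𝒲, ?_, h𝒲cnt.image g, ⟨?_, ?_, ?_⟩, ?_, ?_⟩
  · rintro _ ⟨W, hW, rfl⟩; exact (hg𝒰 W hW).1
  · exact h𝒲cof.1.image hginj
  · rintro _ ⟨W, hW, rfl⟩
    exact ⟨h𝒰.1 _ (hg𝒰 W hW).1, fun h => hnt (h ▸ (hg𝒰 W hW).1)⟩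
  · rintro S ⟨B, hBm, L, hLm, hS⟩
    have hP : (B ∪ B₁) ×ˢ (L ∪ L₁) ∈ prodBorn 𝓑 𝓛 :=
      ⟨B ∪ B₁, hB.union_mem hBm hB₁, L ∪ L₁, hL.union_mem hLm hL₁, subset_rfl⟩
    refine ((h𝒲cof.2.2 _ hP).image g).subset ?_
    rintro _ ⟨⟨W, hW, rfl⟩, hns⟩
    exact ⟨W, ⟨hW, fun hPW => hns (key B L (g W) ((hg𝒰 W hW).2.symm ▸ hPW) S hS)⟩, rfl⟩
  · rintro _ ⟨W, hW, rfl⟩; exact h𝒰.1 _ (hg𝒰 W hW).1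
  · rintro S ⟨B, hBm, L, hLm, hS⟩
    have hP : (B ∪ B₁) ×ˢ (L ∪ L₁) ∈ prodBorn 𝓑 𝓛 :=
      ⟨B ∪ B₁, hB.union_mem hBm hB₁, L ∪ L₁, hL.union_mem hLm hL₁, subset_rfl⟩
    obtain ⟨W, hW, hPW⟩ := h𝒲cov.2 _ hP
    exact ⟨g W, ⟨W, hW, rfl⟩, key B L (g W) ((hg𝒰 W hW).2.symm ▸ hPW) S hS⟩

/-- If `X` is a `γ_𝓑`-space, `Y` is a `γ_𝓛`-space and `X × Y` is a `γ_{𝓑⊗𝓛}`-space,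
then the topological sum `X + Y` is a `γ_{𝓑⊕𝓛}`-space. -/
theorem statement17 {X Y : Type*} [TopologicalSpace X] [TopologicalSpace Y]
    (𝓑 : Set (Set X)) (𝓛 : Set (Set Y))
    (hB : IsBornology 𝓑) (hL : IsBornology 𝓛)
    (h1 : GammaBSpace 𝓑) (h2 : GammaBSpace 𝓛)
    (h3 : GammaBSpace (prodBorn 𝓑 𝓛)) :
    GammaBSpace (sumBorn2 𝓑 𝓛) := by
  rcases isEmpty_or_nonempty X with hX | hX
  · haveI := hX
    obtain ⟨B₀, hB₀⟩ := gamma_nonempty h1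
    exact gamma_sum_left (hB.subset_mem (Set.empty_subset B₀) hB₀) h2
  rcases isEmpty_or_nonempty Y with hY | hY
  · haveI := hY
    obtain ⟨L₀, hL₀⟩ := gamma_nonempty h2
    exact gamma_sum_right (hL.subset_mem (Set.empty_subset L₀) hL₀) h1
  exact gamma_sum_main hB hL hX hY h3
end

section
/- Let X be a topological space with a family B of subsets, and let f, g : ω → [2, ℵ₀) be unbounded functions. If Player II has a winning strategy in the game G_f(O_B, O_B), then Player II has a winning strategy in G_g(O_B, O_B). -/
/-- `σ` is a winning strategy for Player II in the game `G_φ(O_𝓑, O_𝓑)`: in inning `n`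
Player I chooses a `𝓑`-covering `A n` and Player II (following `σ`, applied to the
history of Player I's moves) selects a subfamily of size `< φ n`; Player II wins a play
if the union of the selections is a `𝓑`-covering. -/
def IIWinning {X : Type*} [TopologicalSpace X] (𝓑 : Set (Set X)) (φ : ℕ → ℕ)
    (σ : List (Set (Set X)) → Set (Set X)) : Prop :=
  ∀ A : ℕ → Set (Set X), (∀ n, IsBCover 𝓑 (A n)) →
    (∀ n, σ (List.ofFn fun i : Fin (n + 1) => A i) ⊆ A n ∧
        (σ (List.ofFn fun i : Fin (n + 1) => A i)).Finite ∧
        (σ (List.ofFn fun i : Fin (n + 1) => A i)).ncard < φ n) ∧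
      IsBCover 𝓑 (⋃ n, σ (List.ofFn fun i : Fin (n + 1) => A i))

/-- `τ` is a winning strategy for Player I in the game `G_φ(O_𝓑, O_𝓑)`: `τ` always
plays `𝓑`-coverings (as a function of the history of Player II's moves), and for every
sequence of legal responses of Player II, the union of the selections is not a
`𝓑`-covering. -/
def IWinning {X : Type*} [TopologicalSpace X] (𝓑 : Set (Set X)) (φ : ℕ → ℕ)
    (τ : List (Set (Set X)) → Set (Set X)) : Prop :=
  (∀ l, IsBCover 𝓑 (τ l)) ∧
    ∀ C : ℕ → Set (Set X),
      (∀ n, C n ⊆ τ (List.ofFn fun i : Fin n => C i) ∧ (C n).Finite ∧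
        (C n).ncard < φ n) →
      ¬ IsBCover 𝓑 (⋃ n, C n)

/-- From unboundedness of `g`, pick a strictly increasing sequence `e` with `f i ≤ g (e i)`. -/
lemma exists_strictMono_dominating (f g : ℕ → ℕ) (hg : ∀ M, ∃ n, M ≤ g n) :
    ∃ e : ℕ → ℕ, StrictMono e ∧ ∀ i, f i ≤ g (e i) := by
  have key : ∀ N M : ℕ, ∃ n, N < n ∧ M ≤ g n := by
    intro N M
    obtain ⟨n, hn⟩ := hg (max M ((Finset.range (N + 1)).sup g + 1))
    refine ⟨n, ?_, le_trans (le_max_left _ _) hn⟩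
    by_contra hc
    push_neg at hc
    have h1 : g n ≤ (Finset.range (N + 1)).sup g :=
      Finset.le_sup (Finset.mem_range.2 (by omega))
    have h2 := le_trans (le_max_right _ _) hn
    omega
  choose step h1 h2 using key
  refine ⟨fun i => Nat.rec (step 0 (f 0)) (fun i ei => step ei (f (i + 1))) i, ?_, ?_⟩
  · exact strictMono_nat_of_lt_succ fun n => h1 _ _
  · intro i
    cases i with
    | zero => exact h2 _ _
    | succ i => exact h2 _ _

open Classical in
/-- Player II's strategy in the `g`-game obtained by playing `σ` only in innings `e i`. -/
noncomputable def shiftStrat {X : Type*} (σ : List (Set (Set X)) → Set (Set X)) (e : ℕ → ℕ) :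
    List (Set (Set X)) → Set (Set X) := fun l =>
  if h : ∃ i, e i + 1 = l.length then
    σ (List.ofFn fun j : Fin (h.choose + 1) => l.getD (e j) ∅)
  else ∅

lemma shiftStrat_eq {X : Type*} (σ : List (Set (Set X)) → Set (Set X)) (e : ℕ → ℕ)
    (he : StrictMono e) (A : ℕ → Set (Set X)) (i : ℕ) :
    shiftStrat σ e (List.ofFn fun k : Fin (e i + 1) => A k) =
      σ (List.ofFn fun j : Fin (i + 1) => A (e j)) := by
  have hlen : (List.ofFn fun k : Fin (e i + 1) => A k).length = e i + 1 :=
    List.length_ofFn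
  have hex : ∃ j, e j + 1 = (List.ofFn fun k : Fin (e i + 1) => A k).length :=
    ⟨i, hlen.symm⟩
  rw [shiftStrat, dif_pos hex]
  have hci : hex.choose = i := he.injective (by have := hex.choose_spec; omega)
  have hget : ∀ j : ℕ, j ≤ i →
      (List.ofFn fun k : Fin (e i + 1) => A k).getD (e j) ∅ = A (e j) := by
    intro j hj
    have hlt : e j < (List.ofFn fun k : Fin (e i + 1) => A k).length := by
      rw [hlen]; exact Nat.lt_succ_of_le (he.monotone hj)
    rw [List.getD_eq_getElem _ _ hlt, List.getElem_ofFn]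
  have hmn : hex.choose + 1 = i + 1 := by omega
  rw [List.ofFn_congr hmn]
  refine congrArg σ (congrArg List.ofFn (funext fun j => ?_))
  have hc : ((Fin.cast hmn.symm j : Fin (hex.choose + 1)) : ℕ) = (j : ℕ) := rfl
  rw [hc]
  exact hget j (Nat.lt_succ_iff.mp j.isLt)

lemma shiftStrat_empty {X : Type*} (σ : List (Set (Set X)) → Set (Set X)) (e : ℕ → ℕ)
    (A : ℕ → Set (Set X)) (n : ℕ) (hn : ¬ ∃ i, e i = n) :
    shiftStrat σ e (List.ofFn fun k : Fin (n + 1) => A k) = ∅ := by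
  rw [shiftStrat, dif_neg]
  push_neg at hn ⊢
  intro i
  simp only [List.length_ofFn]
  have := hn i
  omega

/-- For unbounded `f, g : ω → [2, ℵ₀)`, if Player II has a winning strategy in
`G_f(O_𝓑, O_𝓑)` then Player II has a winning strategy in `G_g(O_𝓑, O_𝓑)`. -/
theorem statement19 {X : Type*} [TopologicalSpace X] (𝓑 : Set (Set X))
    (f g : ℕ → ℕ) (hf2 : ∀ n, 2 ≤ f n) (hg2 : ∀ n, 2 ≤ g n)
    (hf : ∀ M, ∃ n, M ≤ f n) (hg : ∀ M, ∃ n, M ≤ g n)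
    (h : ∃ σ, IIWinning 𝓑 f σ) : ∃ σ, IIWinning 𝓑 g σ := by
  classical
  obtain ⟨σ, hσ⟩ := h
  obtain ⟨e, he, hfe⟩ := exists_strictMono_dominating f g hg
  refine ⟨shiftStrat σ e, ?_⟩
  intro A hA
  obtain ⟨hleg, hcov⟩ := hσ (fun i => A (e i)) (fun i => hA (e i))
  have key : ∀ i, shiftStrat σ e (List.ofFn fun k : Fin (e i + 1) => A k) =
      σ (List.ofFn fun j : Fin (i + 1) => A (e j)) := shiftStrat_eq σ e he A
  constructor
  · intro n
    by_cases hn : ∃ i, e i = n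
    · obtain ⟨i, rfl⟩ := hn
      rw [key i]
      obtain ⟨h1, h2, h3⟩ := hleg i
      exact ⟨h1, h2, lt_of_lt_of_le h3 (hfe i)⟩
    · rw [shiftStrat_empty σ e A n hn]
      refine ⟨Set.empty_subset _, Set.finite_empty, ?_⟩
      rw [Set.ncard_empty]
      have := hg2 n
      omega
  · have hU : (⋃ n, shiftStrat σ e (List.ofFn fun k : Fin (n + 1) => A k)) =
        ⋃ i, σ (List.ofFn fun j : Fin (i + 1) => A (e j)) := by
      apply subset_antisymm
      · refine Set.iUnion_subset fun n => ?_
        by_cases hn : ∃ i, e i = n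
        · obtain ⟨i, rfl⟩ := hn
          rw [key i]
          exact Set.subset_iUnion (fun i => σ (List.ofFn fun j : Fin (i + 1) => A (e j))) i
        · rw [shiftStrat_empty σ e A n hn]
          exact Set.empty_subset _
      · refine Set.iUnion_subset fun i => ?_
        rw [← key i]
        exact Set.subset_iUnion
          (fun n => shiftStrat σ e (List.ofFn fun k : Fin (n + 1) => A k)) (e i)
    rw [hU]
    exact hcov
end
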